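/- Let G be a connected graph of order at least 3. Then χ'_it(G) = χ(G) + 1 if and only if χ(G) ≡ 2 (mod 4) and every proper χ(G)-vertex coloring of G has all color classes of odd size; otherwise χ'_it(G) = χ(G). -/

import Mathlib

open Finset

-- The vertex label induced by an edge coloring: `twinLabel G s v = Σ_{e ∈ E_v} s e` in `ZMod k`.
open scoped Classical in
noncomputable def twinLabel {V : Type*} [Fintype V] (G : SimpleGraph V) {k : ℕ}
    (s : Sym2 V → ZMod k) (v : V) : ZMod k :=
  ∑ e ∈ G.incidenceFinset v, s e

/-- `s` is an improper twin `k`-edge coloring of `G`: the induced vertex labeling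
is a proper vertex coloring. -/
def IsImproperTwin {V : Type*} [Fintype V] (G : SimpleGraph V) (k : ℕ)
    (s : Sym2 V → ZMod k) : Prop :=
  ∀ ⦃u v : V⦄, G.Adj u v → twinLabel G s u ≠ twinLabel G s v

/-- The improper twin chromatic index: the least `k ≥ 2` admitting an improper twin
`k`-edge coloring. -/
noncomputable def improperTwinIndex {V : Type*} [Fintype V] (G : SimpleGraph V) : ℕ :=
  sInf {k | 2 ≤ k ∧ ∃ s : Sym2 V → ZMod k, IsImproperTwin G k s}

open scoped Classical

namespace Twin

variable {V : Type*} [Fintype V] (G : SimpleGraph V) {k : ℕ}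

def Achievable (k : ℕ) (t : V → ZMod k) : Prop :=
  ∃ s : Sym2 V → ZMod k, ∀ v, twinLabel G s v = t v

variable {G}

lemma ach_zero : Achievable G k 0 := by
  refine ⟨0, fun v => ?_⟩
  simp [twinLabel]

lemma ach_add {t₁ t₂ : V → ZMod k} (h₁ : Achievable G k t₁) (h₂ : Achievable G k t₂) :
    Achievable G k (t₁ + t₂) := by
  obtain ⟨s₁, hs₁⟩ := h₁
  obtain ⟨s₂, hs₂⟩ := h₂
  refine ⟨s₁ + s₂, fun v => ?_⟩
  simp only [twinLabel, Pi.add_apply, Finset.sum_add_distrib, ← hs₁ v, ← hs₂ v, twinLabel]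

lemma ach_sum {ι : Type*} (A : Finset ι) (f : ι → V → ZMod k)
    (h : ∀ i ∈ A, Achievable G k (f i)) : Achievable G k (∑ i ∈ A, f i) := by
  classical
  induction A using Finset.induction_on with
  | empty => simpa using ach_zero
  | @insert a A' hx ih =>
    rw [Finset.sum_insert hx]
    exact ach_add (h a (Finset.mem_insert_self a A'))
      (ih fun i hi => h i (Finset.mem_insert_of_mem hi))

lemma twinLabel_single {a b : V} (hab : G.Adj a b) (x : ZMod k) (v : V) :
    twinLabel G (fun e => if e = s(a,b) then x else 0) v
      = (if v = a then x else 0) + (if v = b then x else 0) := by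
  classical
  rw [twinLabel]
  rw [Finset.sum_ite_eq' (G.incidenceFinset v) (s(a,b)) (fun _ => x)]
  have hne : a ≠ b := hab.ne
  by_cases h1 : v = a
  · subst h1
    simp [SimpleGraph.mem_incidenceFinset, SimpleGraph.incidenceSet, hab, hne, hne.symm,
      Sym2.mem_iff, hab.symm]
  · by_cases h2 : v = b
    · subst h2
      simp [SimpleGraph.mem_incidenceFinset, SimpleGraph.incidenceSet, hab, h1, Sym2.mem_iff]
    · simp [SimpleGraph.mem_incidenceFinset, SimpleGraph.incidenceSet, h1, h2, Sym2.mem_iff, hab]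

lemma ach_edge {a b : V} (hab : G.Adj a b) (x : ZMod k) :
    Achievable G k (fun v => (if v = a then x else 0) + (if v = b then x else 0)) :=
  ⟨_, twinLabel_single hab x⟩

lemma ach_walk {u v : V} (p : G.Walk u v) (x : ZMod k) :
    Achievable G k
      (fun w => (if w = u then x else 0) + (-1 : ZMod k) ^ (p.length + 1) * (if w = v then x else 0)) := by
  induction p generalizing x with
  | nil =>
    rename_i a
    have h0 : (fun w => (if w = a then x else 0) + (-1 : ZMod k) ^ (0 + 1) * (if w = a then x else 0))
        = (0 : V → ZMod k) := by
      funext w; by_cases h : w = a <;> simp [h]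
    rw [SimpleGraph.Walk.length_nil, h0]; exact ach_zero
  | @cons a b c hab q ih =>
    have h3 := ach_add (ach_edge hab x) (ih (-x))
    have heq : ((fun v => (if v = a then x else 0) + (if v = b then x else 0)) +
        fun w => (if w = b then -x else 0) + (-1 : ZMod k) ^ (q.length + 1) * (if w = c then -x else 0))
        = fun w => (if w = a then x else 0) +
            (-1 : ZMod k) ^ ((SimpleGraph.Walk.cons hab q).length + 1) * (if w = c then x else 0) := by
      funext w
      simp only [Pi.add_apply, SimpleGraph.Walk.length_cons]
      have hBC : (if w = b then x else 0) + (if w = b then -x else 0) = 0 := by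
        by_cases h : w = b <;> simp [h]
      have hD : (-1 : ZMod k) ^ (q.length + 1) * (if w = c then -x else 0)
          = (-1 : ZMod k) ^ (q.length + 1 + 1) * (if w = c then x else 0) := by
        by_cases h : w = c <;> simp [h, pow_succ] <;> ring
      linear_combination hBC + hD
    rwa [heq] at h3


/-- In a connected non-2-colorable graph there is an odd closed walk. -/
lemma exists_odd_closed_walk (hG : G.Connected) (h2 : ¬ G.Colorable 2) :
    ∃ (r : V) (p : G.Walk r r), Odd p.length := by
  by_contra hno
  push_neg at hno
  apply h2
  have hne : Nonempty V := hG.nonempty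
  obtain ⟨r⟩ := hne
  have hprop : ∀ u v : V, G.Adj u v → (G.dist r u) % 2 ≠ (G.dist r v) % 2 := by
    intro u v huv h
    obtain ⟨p, hp⟩ := hG.exists_walk_length_eq_dist r u
    obtain ⟨q, hq⟩ := hG.exists_walk_length_eq_dist r v
    have hclosed := hno r (p.append ((SimpleGraph.Walk.cons huv q.reverse)))
    rw [Nat.not_odd_iff_even] at hclosed
    rw [SimpleGraph.Walk.length_append, SimpleGraph.Walk.length_cons,
      SimpleGraph.Walk.length_reverse, hp, hq, Nat.even_iff] at hclosed
    omega
  have C : G.Coloring (Fin 2) := SimpleGraph.Coloring.mk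
    (fun v => ⟨G.dist r v % 2, Nat.mod_lt _ (by norm_num)⟩)
    (by intro u v huv h; exact hprop u v huv (by simpa using congrArg Fin.val h))
  exact ⟨C⟩

/-- With an odd closed walk, achieve `x` at `v` and `ε·x` at `r` (the odd-walk base). -/
lemma ach_pair (hG : G.Connected) {r : V} (p₀ : G.Walk r r) (hodd : Odd p₀.length)
    (v : V) (x ε : ZMod k) (hε : ε = 1 ∨ ε = -1) :
    Achievable G k (fun w => (if w = v then x else 0) + ε * (if w = r then x else 0)) := by
  obtain ⟨q⟩ := hG v r
  by_cases hc : (-1 : ZMod k) ^ (q.length + 1) = ε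
  · have := ach_walk q x
    rwa [hc] at this
  · have hach := ach_walk (q.append p₀) x
    have hlen : (-1 : ZMod k) ^ ((q.append p₀).length + 1) = ε := by
      have hodd2 := hodd
      rw [Nat.odd_iff] at hodd2
      rw [SimpleGraph.Walk.length_append]
      rcases Nat.even_or_odd (q.length + 1) with he | ho
      · have h1 : (-1 : ZMod k) ^ (q.length + 1) = 1 := he.neg_one_pow
        have hε' : ε = -1 := by
          rcases hε with h | h
          · exact absurd (h1.trans h.symm) hc
          · exact h
        have h2 : Odd (q.length + p₀.length + 1) := by
          rw [Nat.even_iff] at he; rw [Nat.odd_iff]; omega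
        rw [hε', h2.neg_one_pow]
      · have h1 : (-1 : ZMod k) ^ (q.length + 1) = -1 := ho.neg_one_pow
        have hε' : ε = 1 := by
          rcases hε with h | h
          · exact h
          · exact absurd (h1.trans h.symm) hc
        have h2 : Even (q.length + p₀.length + 1) := by
          rw [Nat.odd_iff] at ho; rw [Nat.even_iff]; omega
        rw [hε', h2.neg_one_pow]
    rwa [hlen] at hach


lemma ach_of_sum_even (hG : G.Connected) {r : V} (p₀ : G.Walk r r) (hodd : Odd p₀.length)
    (t : V → ZMod k) (h : ∃ y, ∑ v, t v = 2 * y) : Achievable G k t := by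
  obtain ⟨y, hy⟩ := h
  have hg : ∀ v : V, Achievable G k
      (fun w => (if w = v then t v else 0) + (-1 : ZMod k) * (if w = r then t v else 0)) :=
    fun v => ach_pair hG p₀ hodd v (t v) (-1) (Or.inr rfl)
  have hsum := ach_sum Finset.univ _ (fun v (_ : v ∈ Finset.univ) => hg v)
  have hr : Achievable G k (fun w => (if w = r then y else 0) + 1 * (if w = r then y else 0)) :=
    ach_pair hG p₀ hodd r y 1 (Or.inl rfl)
  have htot := ach_add hsum hr
  have heq : ((∑ v, fun w => (if w = v then t v else 0) + (-1 : ZMod k) * (if w = r then t v else 0)) +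
      fun w => (if w = r then y else 0) + 1 * (if w = r then y else 0)) = t := by
    funext w
    simp only [Finset.sum_apply, Pi.add_apply, Finset.sum_add_distrib]
    rw [Finset.sum_ite_eq Finset.univ w t]
    by_cases hw : w = r
    · subst hw
      simp only [if_pos rfl, Finset.mem_univ, if_true, one_mul]
      have : ∑ v, (-1 : ZMod k) * t v = -(2 * y) := by
        rw [← Finset.mul_sum, hy]; ring
      rw [this]; ring
    · simp [hw]
  rwa [heq] at htot

lemma ach_of_parts_sum_eq (hG : G.Connected) (c : G.Coloring Bool) (t : V → ZMod k)
    (h : ∑ v ∈ Finset.univ.filter (fun v => c v = true), t v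
       = ∑ v ∈ Finset.univ.filter (fun v => c v = false), t v) :
    Achievable G k t := by
  obtain ⟨r⟩ := hG.nonempty
  have hg : ∀ v : V, Achievable G k (fun w => (if w = v then t v else 0) +
      (if c v = c r then (-1 : ZMod k) else 1) * (if w = r then t v else 0)) := by
    intro v
    obtain ⟨q⟩ := hG v r
    have hach := ach_walk q (t v)
    have hEven : Even q.length ↔ (c v = c r) := by
      rw [c.even_length_iff_congr q]
      cases hcv : c v <;> cases hcr : c r <;> simp
    have hparity : (-1 : ZMod k) ^ (q.length + 1) = (if c v = c r then (-1 : ZMod k) else 1) := by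
      by_cases hc : c v = c r
      · rw [if_pos hc]
        exact (Even.add_one (hEven.mpr hc)).neg_one_pow
      · rw [if_neg hc]
        have : Odd q.length := Nat.not_even_iff_odd.mp (fun he => hc (hEven.mp he))
        exact (Odd.add_one this).neg_one_pow
    rwa [hparity] at hach
  have hsum := ach_sum Finset.univ _ (fun v (_ : v ∈ Finset.univ) => hg v)
  have heq : (∑ v, fun w => (if w = v then t v else 0) +
      (if c v = c r then (-1 : ZMod k) else 1) * (if w = r then t v else 0)) = t := by
    funext w
    simp only [Finset.sum_apply, Pi.add_apply, Finset.sum_add_distrib]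
    rw [Finset.sum_ite_eq Finset.univ w t]
    by_cases hw : w = r
    · simp only [Finset.mem_univ, if_true, if_pos hw]
      have hzero : ∑ v, (if c v = c r then (-1 : ZMod k) else 1) * t v = 0 := by
        rw [← Finset.sum_filter_add_sum_filter_not Finset.univ (fun v => c v = c r)]
        have h1 : ∑ v ∈ Finset.univ.filter (fun v => c v = c r),
            (if c v = c r then (-1 : ZMod k) else 1) * t v
            = -(∑ v ∈ Finset.univ.filter (fun v => c v = c r), t v) := by
          rw [← Finset.sum_neg_distrib]
          refine Finset.sum_congr rfl fun v hv => ?_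
          rw [if_pos (Finset.mem_filter.mp hv).2]; ring
        have h2 : ∑ v ∈ Finset.univ.filter (fun v => ¬ c v = c r),
            (if c v = c r then (-1 : ZMod k) else 1) * t v
            = ∑ v ∈ Finset.univ.filter (fun v => ¬ c v = c r), t v := by
          refine Finset.sum_congr rfl fun v hv => ?_
          rw [if_neg (Finset.mem_filter.mp hv).2]; ring
        rw [h1, h2]
        cases hcr : c r
        · have e2 : (Finset.univ.filter (fun v => ¬ c v = false))
              = Finset.univ.filter (fun v => c v = true) := by
            apply Finset.filter_congr; intro v _; cases hcv : c v <;> simp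
          rw [e2, h]; ring
        · have e2 : (Finset.univ.filter (fun v => ¬ c v = true))
              = Finset.univ.filter (fun v => c v = false) := by
            apply Finset.filter_congr; intro v _; cases hcv : c v <;> simp
          rw [e2, h]; ring
      rw [hzero]; ring
    · simp [hw]
  rwa [heq] at hsum

lemma sum_twinLabel (s : Sym2 V → ZMod k) :
    ∑ v, twinLabel G s v = 2 * ∑ e ∈ G.edgeFinset, s e := by
  classical
  have h1 : ∀ v : V, twinLabel G s v = ∑ e ∈ G.edgeFinset, if v ∈ e then s e else 0 := by
    intro v
    rw [twinLabel, ← Finset.sum_filter]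
    apply Finset.sum_congr _ (fun _ _ => rfl)
    convert (G.incidenceFinset_eq_filter v) using 2
  rw [Finset.sum_congr rfl (fun v _ => h1 v), Finset.sum_comm]
  rw [Finset.mul_sum]
  refine Finset.sum_congr rfl fun e he => ?_
  induction e using Sym2.ind with
  | _ a b =>
    have hadj : G.Adj a b := (SimpleGraph.mem_edgeFinset.mp he)
    have hne : a ≠ b := hadj.ne
    have hflt : (Finset.univ.filter (fun v => v ∈ s(a,b))) = {a, b} := by
      ext v; simp [Sym2.mem_iff]
    rw [← Finset.sum_filter, hflt, Finset.sum_pair hne]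
    ring


lemma even_iff_cast_two {a : ℕ} : Even a ↔ ((a : ℕ) : ZMod 2) = 0 := by
  rw [ZMod.natCast_eq_zero_iff]
  exact even_iff_two_dvd

lemma odd_iff_cast_two {a : ℕ} : Odd a ↔ ((a : ℕ) : ZMod 2) = 1 := by
  constructor
  · intro h
    rw [Nat.odd_iff] at h
    rw [← ZMod.natCast_mod, h]
    norm_num
  · intro h
    rcases Nat.even_or_odd a with he | ho
    · rw [even_iff_cast_two.mp he] at h; exact absurd h (by decide)
    · exact ho

lemma card_odd_range (n : ℕ) :
    ((Finset.range n).filter (fun j => j % 2 = 1)).card = n / 2 := by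
  induction n with
  | zero => simp
  | succ m ih =>
    rw [Finset.range_add_one, Finset.filter_insert]
    by_cases h : m % 2 = 1
    · rw [if_pos h, Finset.card_insert_of_notMem (by simp), ih]
      omega
    · rw [if_neg h, ih]
      omega

lemma card_odd_fin (n : ℕ) :
    ((Finset.univ : Finset (Fin n)).filter (fun i : Fin n => i.val % 2 = 1)).card = n / 2 := by
  rw [← card_odd_range n]
  apply Finset.card_bij (fun (i : Fin n) _ => (i : ℕ))
  · intro a ha
    simp only [Finset.mem_filter, Finset.mem_univ, true_and] at ha
    simp only [Finset.mem_filter, Finset.mem_range]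
    exact ⟨a.isLt, ha⟩
  · intro a _ b _ hab
    exact Fin.val_injective hab
  · intro b hb
    simp only [Finset.mem_filter, Finset.mem_range] at hb
    exact ⟨⟨b, hb.1⟩, by simp [hb.2]⟩

/-- fiber decomposition of a sum through a map -/
lemma sum_fiber {V' β M : Type*} [Fintype V'] [Fintype β] [AddCommMonoid M]
    (C : V' → β) (f : β → M) :
    ∑ v : V', f (C v) = ∑ b : β, ((Finset.univ.filter (fun v => C v = b)).card) • f b := by
  classical
  rw [Finset.sum_comp]
  apply Finset.sum_subset (Finset.subset_univ _)
  intro b _ hb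
  have hemp : (Finset.univ.filter (fun v => C v = b)) = ∅ := by
    ext v
    simp only [Finset.mem_filter, Finset.mem_univ, true_and, Finset.notMem_empty, iff_false]
    intro hv
    exact hb (Finset.mem_image.mpr ⟨v, Finset.mem_univ v, hv⟩)
  rw [hemp]
  simp


lemma exists_half_subset_even_sum (n : ℕ) (hn2 : n % 2 = 0) (f : Fin n → ℕ)
    (h : n % 4 = 0 ∨ ∃ i, Even (f i)) :
    ∃ s : Finset (Fin n), s.card = n / 2 ∧ Even (∑ i ∈ s, f i) := by
  classical
  set O := Finset.univ.filter (fun i => Odd (f i)) with hO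
  set E := Finset.univ.filter (fun i => ¬ Odd (f i)) with hE
  have hOE : O.card + E.card = n := by
    rw [hO, hE, Finset.card_filter_add_card_filter_not]
    simp
  have hchoice : ∃ j, j % 2 = 0 ∧ j ≤ O.card ∧ j ≤ n / 2 ∧ n / 2 - j ≤ E.card := by
    by_cases hE2 : n / 2 ≤ E.card
    · exact ⟨0, by omega⟩
    · by_cases hE0 : E.card = 0
      · have hn4 : n % 4 = 0 := by
          rcases h with h4 | ⟨i, hi⟩
          · exact h4
          · exfalso
            have : i ∈ E := by
              rw [hE, Finset.mem_filter]
              exact ⟨Finset.mem_univ i, Nat.not_odd_iff_even.mpr hi⟩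
            rw [Finset.card_eq_zero] at hE0
            simp [hE0] at this
        exact ⟨n / 2, by omega⟩
      · refine ⟨if (n / 2 - E.card) % 2 = 0 then n / 2 - E.card else n / 2 - E.card + 1, ?_⟩
        by_cases hpar : (n / 2 - E.card) % 2 = 0 <;> simp only [hpar, if_true, if_false, true_and] <;> omega
  obtain ⟨j, hj2, hjO, hjhalf, hjE⟩ := hchoice
  obtain ⟨s1, hs1sub, hs1card⟩ := Finset.exists_subset_card_eq hjO
  obtain ⟨s2, hs2sub, hs2card⟩ := Finset.exists_subset_card_eq hjE
  have hdisj : Disjoint s1 s2 := by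
    refine Finset.disjoint_left.mpr fun a ha1 ha2 => ?_
    have h1 := Finset.mem_filter.mp (hs1sub ha1)
    have h2 := Finset.mem_filter.mp (hs2sub ha2)
    exact h2.2 h1.2
  refine ⟨s1 ∪ s2, ?_, ?_⟩
  · rw [Finset.card_union_of_disjoint hdisj, hs1card, hs2card]
    omega
  · rw [Finset.sum_union hdisj, even_iff_cast_two]
    push_cast
    have hsum1 : ∑ i ∈ s1, ((f i : ℕ) : ZMod 2) = 0 := by
      have : ∀ i ∈ s1, ((f i : ℕ) : ZMod 2) = 1 := fun i hi =>
        odd_iff_cast_two.mp (Finset.mem_filter.mp (hs1sub hi)).2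
      rw [Finset.sum_congr rfl this, Finset.sum_const, hs1card, nsmul_eq_mul, mul_one]
      exact even_iff_cast_two.mp (Nat.even_iff.mpr hj2)
    have hsum2 : ∑ i ∈ s2, ((f i : ℕ) : ZMod 2) = 0 := by
      have : ∀ i ∈ s2, ((f i : ℕ) : ZMod 2) = 0 := fun i hi =>
        even_iff_cast_two.mp (Nat.not_odd_iff_even.mp (Finset.mem_filter.mp (hs2sub hi)).2)
      rw [Finset.sum_congr rfl this, Finset.sum_const, smul_zero]
    rw [hsum1, hsum2, add_zero]

lemma exists_parity_injection {n : ℕ} (s : Finset (Fin n)) (hs : s.card = n / 2) :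
    ∃ ρ : Fin n → Fin n, Function.Injective ρ ∧ ∀ i, ((ρ i).val % 2 = 1 ↔ i ∈ s) := by
  classical
  set T := Finset.univ.filter (fun i : Fin n => i.val % 2 = 1) with hT
  have hTcard : T.card = n / 2 := card_odd_fin n
  have h1 : Fintype.card ↥s = Fintype.card ↥T := by
    simp [Fintype.card_coe, hs, hTcard]
  have h2 : Fintype.card ↥(sᶜ) = Fintype.card ↥(Tᶜ) := by
    simp [Fintype.card_coe, Finset.card_compl, hs, hTcard]
  let e1 : ↥s ≃ ↥T := Fintype.equivOfCardEq h1
  let e2 : ↥(sᶜ) ≃ ↥(Tᶜ) := Fintype.equivOfCardEq h2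
  have hmemT : ∀ (i : ↥s), ((e1 i : Fin n)).val % 2 = 1 := by
    intro i
    have := (e1 i).prop
    simp only [hT, Finset.mem_filter] at this
    exact this.2
  have hmemTc : ∀ (i : ↥(sᶜ)), ¬ ((e2 i : Fin n)).val % 2 = 1 := by
    intro i
    have := (e2 i).prop
    simp only [Finset.mem_compl, hT, Finset.mem_filter] at this
    intro hc
    exact this ⟨Finset.mem_univ _, hc⟩
  refine ⟨fun i => if h : i ∈ s then (e1 ⟨i, h⟩ : Fin n) else (e2 ⟨i, Finset.mem_compl.mpr h⟩ : Fin n),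
    ?_, ?_⟩
  · intro a b hab
    dsimp only at hab
    by_cases ha : a ∈ s <;> by_cases hb : b ∈ s
    · rw [dif_pos ha, dif_pos hb] at hab
      exact congrArg Subtype.val (e1.injective (Subtype.ext hab))
    · rw [dif_pos ha, dif_neg hb] at hab
      exact absurd (hab ▸ hmemT ⟨a, ha⟩) (hmemTc ⟨b, Finset.mem_compl.mpr hb⟩)
    · rw [dif_neg ha, dif_pos hb] at hab
      exact absurd (hab ▸ hmemTc ⟨a, Finset.mem_compl.mpr ha⟩) (fun h => h (hmemT ⟨b, hb⟩))
    · rw [dif_neg ha, dif_neg hb] at hab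
      exact congrArg Subtype.val (e2.injective (Subtype.ext hab))
  · intro i
    dsimp only
    by_cases h : i ∈ s
    · rw [dif_pos h]
      exact ⟨fun _ => h, fun _ => hmemT ⟨i, h⟩⟩
    · rw [dif_neg h]
      exact ⟨fun hc => absurd hc (hmemTc ⟨i, Finset.mem_compl.mpr h⟩), fun hc => absurd hc h⟩


lemma twin_of_achievable {t : V → ZMod k} (hprop : ∀ u v : V, G.Adj u v → t u ≠ t v)
    (h : Achievable G k t) : ∃ s, IsImproperTwin G k s := by
  obtain ⟨s, hs⟩ := h
  exact ⟨s, fun u v huv => by rw [hs u, hs v]; exact hprop u v huv⟩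

lemma ncard_colorClass {β : Type*} [DecidableEq β] (C : G.Coloring β) (i : β) :
    (C.colorClass i).ncard = (Finset.univ.filter (fun v => C v = i)).card := by
  classical
  rw [Set.ncard_eq_toFinset_card']
  congr 1
  ext v
  simp [SimpleGraph.Coloring.colorClass, Set.mem_toFinset]
  exact Set.mem_toFinset.trans Iff.rfl

lemma odd_gauss {n : ℕ} (hn : n % 4 = 2) : Odd (∑ j ∈ Finset.range n, j) := by
  obtain ⟨m, hm⟩ : ∃ m, n = 4 * m + 2 := ⟨n / 4, by omega⟩
  subst hm
  have h2 : (∑ j ∈ Finset.range (4 * m + 2), j) * 2 = (4 * m + 2) * (4 * m + 2 - 1) :=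
    Finset.sum_range_id_mul_two (4 * m + 2)
  have h3 : (4 * m + 2) * (4 * m + 2 - 1) = ((2 * m + 1) * (4 * m + 1)) * 2 := by
    have he : 4 * m + 2 - 1 = 4 * m + 1 := by omega
    rw [he]; ring
  have h4 : (∑ j ∈ Finset.range (4 * m + 2), j) = (2 * m + 1) * (4 * m + 1) := by omega
  rw [h4]
  exact Odd.mul ⟨m, by ring⟩ ⟨2 * m, by ring⟩

/-- Construction for even `n` using a half-subset with even class-size sum. -/
lemma construction_even (hG : G.Connected) {r : V} (p₀ : G.Walk r r) (hodd : Odd p₀.length)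
    {n : ℕ} (hn2 : n % 2 = 0) (hnpos : 0 < n) (C : G.Coloring (Fin n))
    (hsub : n % 4 = 0 ∨ ∃ i, Even ((Finset.univ.filter (fun v => C v = i)).card)) :
    ∃ s, IsImproperTwin G n s := by
  classical
  obtain ⟨S, hScard, hSeven⟩ := exists_half_subset_even_sum n hn2
    (fun i => (Finset.univ.filter (fun v => C v = i)).card) hsub
  obtain ⟨ρ, hρinj, hρpar⟩ := exists_parity_injection S hScard
  set t : V → ZMod n := fun v => (((ρ (C v)).val : ℕ) : ZMod n) with ht
  have hproper : ∀ u v : V, G.Adj u v → t u ≠ t v := by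
    intro u v huv hc
    rw [ht] at hc
    have := congrArg ZMod.val hc
    rw [ZMod.val_cast_of_lt (ρ (C u)).isLt, ZMod.val_cast_of_lt (ρ (C v)).isLt] at this
    exact C.valid huv (hρinj (Fin.val_injective this))
  apply twin_of_achievable hproper
  apply ach_of_sum_even hG p₀ hodd
  -- compute the sum
  have hsum : ∑ v, t v = ((∑ b : Fin n,
      (Finset.univ.filter (fun v => C v = b)).card * (ρ b).val : ℕ) : ZMod n) := by
    rw [ht]
    rw [sum_fiber (C := fun v => C v) (f := fun b => (((ρ b).val : ℕ) : ZMod n))]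
    rw [Nat.cast_sum]
    refine Finset.sum_congr rfl fun b _ => ?_
    rw [Nat.cast_mul, nsmul_eq_mul]
    congr!
  have hN : Even (∑ b : Fin n, (Finset.univ.filter (fun v => C v = b)).card * (ρ b).val) := by
    rw [even_iff_cast_two]
    push_cast
    have hterm : ∀ b : Fin n, ((Finset.univ.filter (fun v => C v = b)).card : ZMod 2)
        * (((ρ b).val : ℕ) : ZMod 2)
        = if b ∈ S then ((Finset.univ.filter (fun v => C v = b)).card : ZMod 2) else 0 := by
      intro b
      by_cases hb : b ∈ S
      · rw [if_pos hb]
        have : (ρ b).val % 2 = 1 := (hρpar b).mpr hb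
        rw [odd_iff_cast_two.mp (Nat.odd_iff.mpr this), mul_one]
      · rw [if_neg hb]
        have hv : (ρ b).val % 2 = 0 := by
          have : ¬ (ρ b).val % 2 = 1 := fun hc => hb ((hρpar b).mp hc)
          omega
        have h0 : (((ρ b).val : ℕ) : ZMod 2) = 0 := even_iff_cast_two.mp (Nat.even_iff.mpr hv)
        rw [h0, mul_zero]
    rw [Finset.sum_congr rfl fun b _ => hterm b, Finset.sum_ite_mem, Finset.univ_inter]
    rw [← Nat.cast_sum]
    exact even_iff_cast_two.mp hSeven
  obtain ⟨m, hm⟩ := hN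
  refine ⟨((m : ℕ) : ZMod n), ?_⟩
  rw [hsum, hm]
  push_cast
  ring

/-- Construction when `2` is a unit mod `k` (e.g. `k` odd). -/
lemma construction_unit (hG : G.Connected) {r : V} (p₀ : G.Walk r r) (hodd : Odd p₀.length)
    {n k : ℕ} (hnk : n ≤ k) (hunit : IsUnit (2 : ZMod k)) (C : G.Coloring (Fin n)) :
    ∃ s, IsImproperTwin G k s := by
  classical
  set t : V → ZMod k := fun v => (((C v).val : ℕ) : ZMod k) with ht
  have hproper : ∀ u v : V, G.Adj u v → t u ≠ t v := by
    intro u v huv hc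
    rw [ht] at hc
    have := congrArg ZMod.val hc
    rw [ZMod.val_cast_of_lt (lt_of_lt_of_le (C u).isLt hnk),
      ZMod.val_cast_of_lt (lt_of_lt_of_le (C v).isLt hnk)] at this
    exact C.valid huv (Fin.val_injective this)
  apply twin_of_achievable hproper
  apply ach_of_sum_even hG p₀ hodd
  obtain ⟨u, hu⟩ := hunit
  refine ⟨(↑u⁻¹ : ZMod k) * ∑ v, t v, ?_⟩
  rw [← hu, ← mul_assoc, Units.mul_inv, one_mul]


lemma colorable_of_twin {k : ℕ} (hk : 2 ≤ k) (s : Sym2 V → ZMod k)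
    (hs : IsImproperTwin G k s) : G.Colorable k := by
  haveI : NeZero k := ⟨by omega⟩
  let C : G.Coloring (ZMod k) := SimpleGraph.Coloring.mk (twinLabel G s)
    (fun {u v} huv => hs huv)
  have := C.colorable
  rwa [ZMod.card] at this

lemma no_twin_of_bad {n : ℕ} (hn4 : n % 4 = 2)
    (hodd : ∀ C : G.Coloring (Fin n), ∀ i : Fin n, Odd (C.colorClass i).ncard)
    (s : Sym2 V → ZMod n) (hs : IsImproperTwin G n s) : False := by
  classical
  haveI : NeZero n := ⟨by omega⟩
  set t : V → ZMod n := twinLabel G s with ht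
  let e : ZMod n ≃ Fin n := Fintype.equivOfCardEq (by rw [ZMod.card, Fintype.card_fin])
  let C : G.Coloring (Fin n) := SimpleGraph.Coloring.mk (fun v => e (t v))
    (fun {u v} huv hc => hs huv (e.injective hc))
  have hfib : ∀ b : ZMod n, Odd ((Finset.univ.filter (fun v => t v = b)).card) := by
    intro b
    have h3 : ((Finset.univ.filter (fun v => t v = b)).card) = (C.colorClass (e b)).ncard := by
      rw [ncard_colorClass]
      apply Finset.card_bij (fun (a : V) _ => a)
      · intro a ha
        simp only [Finset.mem_filter] at ha ⊢
        exact ⟨ha.1, congrArg e ha.2⟩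
      · intro a _ b' _ hab; exact hab
      · intro a ha
        simp only [Finset.mem_filter] at ha
        refine ⟨a, ?_, rfl⟩
        simp only [Finset.mem_filter]
        exact ⟨ha.1, e.injective ha.2⟩
    rw [h3]; exact hodd C (e b)
  have hsum1 : ∑ v, t v
      = ((∑ b : ZMod n, (Finset.univ.filter (fun v => t v = b)).card * b.val : ℕ) : ZMod n) := by
    rw [sum_fiber (C := t) (f := fun b => b), Nat.cast_sum]
    refine Finset.sum_congr rfl fun b _ => ?_
    rw [Nat.cast_mul, nsmul_eq_mul, ZMod.natCast_rightInverse b]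
    congr!
  set N := ∑ b : ZMod n, (Finset.univ.filter (fun v => t v = b)).card * b.val with hN
  have hNodd : Odd N := by
    rw [odd_iff_cast_two, hN]
    push_cast
    have hterm : ∀ b : ZMod n,
        ((Finset.univ.filter (fun v => t v = b)).card : ZMod 2) * ((b.val : ℕ) : ZMod 2)
        = ((b.val : ℕ) : ZMod 2) := by
      intro b
      rw [odd_iff_cast_two.mp (hfib b), one_mul]
    rw [Finset.sum_congr rfl fun b _ => hterm b, ← Nat.cast_sum]
    have hvals : ∑ b : ZMod n, b.val = ∑ j ∈ Finset.range n, j := by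
      refine Finset.sum_nbij' (fun b => b.val) (fun a => (a : ZMod n)) ?_ ?_ ?_ ?_ ?_
      · intro b _; exact Finset.mem_range.mpr (ZMod.val_lt b)
      · intro a _; exact Finset.mem_univ _
      · intro b _; exact ZMod.natCast_rightInverse b
      · intro a ha; exact ZMod.val_cast_of_lt (Finset.mem_range.mp ha)
      · intro b _; rfl
    rw [hvals]
    exact odd_iff_cast_two.mp (odd_gauss hn4)
  have h2 := sum_twinLabel (G := G) s
  rw [← ht, hsum1] at h2
  have hdvd : (2 : ℕ) ∣ n := by omega
  let φ : ZMod n →+* ZMod 2 := ZMod.castHom hdvd (ZMod 2)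
  have h3 := congrArg φ h2
  rw [map_natCast, map_mul, map_ofNat] at h3
  rw [odd_iff_cast_two.mp hNodd] at h3
  have : (2 : ZMod 2) = 0 := by decide
  rw [this, zero_mul] at h3
  exact one_ne_zero h3

/-- n = 2 construction with an even colour class. -/
lemma construction_two (hG : G.Connected) (C : G.Coloring (Fin 2)) (i : Fin 2)
    (heven : Even ((Finset.univ.filter (fun v => C v = i)).card)) :
    ∃ s, IsImproperTwin G 2 s := by
  classical
  have hfin : ∀ a b c : Fin 2, a ≠ b → ((a = c) ↔ ¬ (b = c)) := by decide
  let cb : G.Coloring Bool := SimpleGraph.Coloring.mk (fun v => decide (C v = i)) (by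
    intro u v huv hc
    rw [decide_eq_decide] at hc
    have h := hfin (C u) (C v) i (C.valid huv)
    tauto)
  have hcb : ∀ v, (cb v = true) ↔ (C v = i) := by
    intro v
    have : cb v = decide (C v = i) := rfl
    rw [this, decide_eq_true_eq]
  set t : V → ZMod 2 := fun v => if C v = i then 1 else 0 with htd
  have hproper : ∀ u v : V, G.Adj u v → t u ≠ t v := by
    intro u v huv
    have h := hfin (C u) (C v) i (C.valid huv)
    by_cases hcu : C u = i
    · have hcv : ¬ C v = i := h.mp hcu
      simp [htd, hcu, hcv]
    · have hcv : C v = i := by tauto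
      simp [htd, hcu, hcv]
  apply twin_of_achievable hproper
  apply ach_of_parts_sum_eq hG cb
  have e1 : Finset.univ.filter (fun v => cb v = true) = Finset.univ.filter (fun v => C v = i) := by
    apply Finset.filter_congr
    intro v _
    rw [hcb v]
  have hsum_true : ∑ v ∈ Finset.univ.filter (fun v => cb v = true), t v = 0 := by
    rw [e1]
    have hone : ∀ v ∈ Finset.univ.filter (fun v => C v = i), t v = 1 := by
      intro v hv
      rw [htd]
      simp [(Finset.mem_filter.mp hv).2]
    rw [Finset.sum_congr rfl hone, Finset.sum_const, nsmul_eq_mul, mul_one]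
    have := even_iff_cast_two.mp heven
    exact_mod_cast this
  have hsum_false : ∑ v ∈ Finset.univ.filter (fun v => cb v = false), t v = 0 := by
    apply Finset.sum_eq_zero
    intro v hv
    have hv2 := (Finset.mem_filter.mp hv).2
    have hni : ¬ C v = i := by
      intro hc
      rw [show cb v = decide (C v = i) from rfl, hc] at hv2
      simp at hv2
    rw [htd]
    simp [hni]
  rw [hsum_true, hsum_false]

/-- k = 3 construction from a `Bool` colouring whose `true` part has at least 2 vertices. -/
lemma construction_three (hG : G.Connected) (cb : G.Coloring Bool)
    (hP : 2 ≤ (Finset.univ.filter (fun v => cb v = true)).card) :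
    ∃ s, IsImproperTwin G 3 s := by
  classical
  set P := Finset.univ.filter (fun v => cb v = true) with hPdef
  set j := (2 * P.card) % 3 with hjdef
  have hj : j ≤ P.card := by omega
  obtain ⟨s1, hs1P, hs1card⟩ := Finset.exists_subset_card_eq hj
  set t : V → ZMod 3 := fun v => if cb v = true then (if v ∈ s1 then 1 else 2) else 0 with htd
  have hproper : ∀ u v : V, G.Adj u v → t u ≠ t v := by
    intro u v huv hc
    have h := cb.valid huv
    cases hcu : cb u <;> cases hcv : cb v
    · exact h (hcu.trans hcv.symm)
    · rw [htd] at hc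
      simp only at hc
      simp [hcu, hcv] at hc
      by_cases h1 : v ∈ s1 <;> simp [h1] at hc <;> revert hc <;> decide
    · rw [htd] at hc
      simp only at hc
      simp [hcu, hcv] at hc
      by_cases h1 : u ∈ s1 <;> simp [h1] at hc <;> revert hc <;> decide
    · exact h (hcu.trans hcv.symm)
  apply twin_of_achievable hproper
  apply ach_of_parts_sum_eq hG cb
  have hsum_false : ∑ v ∈ Finset.univ.filter (fun v => cb v = false), t v = 0 := by
    apply Finset.sum_eq_zero
    intro v hv
    have hv2 := (Finset.mem_filter.mp hv).2
    rw [htd]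
    simp [hv2]
  have hsum_true : ∑ v ∈ Finset.univ.filter (fun v => cb v = true), t v = 0 := by
    rw [← hPdef]
    have hsplit : ∑ v ∈ P, t v = ∑ v ∈ s1, t v + ∑ v ∈ P \ s1, t v := by
      rw [← Finset.sum_union (Finset.disjoint_sdiff)]
      congr 1
      rw [Finset.union_sdiff_of_subset hs1P]
    have hts1 : ∀ v ∈ s1, t v = 1 := by
      intro v hv
      have hvP := hs1P hv
      rw [hPdef, Finset.mem_filter] at hvP
      rw [htd]
      simp [hvP.2, hv]
    have hts2 : ∀ v ∈ P \ s1, t v = 2 := by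
      intro v hv
      rw [Finset.mem_sdiff] at hv
      have hvP := hv.1
      rw [hPdef, Finset.mem_filter] at hvP
      rw [htd]
      simp [hvP.2, hv.2]
    rw [hsplit, Finset.sum_congr rfl hts1, Finset.sum_congr rfl hts2,
      Finset.sum_const, Finset.sum_const, hs1card, Finset.card_sdiff_of_subset hs1P, hs1card]
    have hc2 : (j • (1 : ZMod 3)) + ((P.card - j) • (2 : ZMod 3))
        = ((j + (P.card - j) * 2 : ℕ) : ZMod 3) := by
      rw [nsmul_eq_mul, nsmul_eq_mul]
      push_cast
      ring
    rw [hc2, ZMod.natCast_eq_zero_iff]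
    omega
  rw [hsum_true, hsum_false]

end Twin
theorem stmt_9 {V : Type*} [Fintype V] (G : SimpleGraph V) (hG : G.Connected)
    (h3 : 3 ≤ Fintype.card V) (n : ℕ) (hn : G.chromaticNumber = n) :
    (improperTwinIndex G = n + 1 ↔
      (n % 4 = 2 ∧
        ∀ C : G.Coloring (Fin n), ∀ i : Fin n, Odd (C.colorClass i).ncard)) ∧
    (¬ (n % 4 = 2 ∧
        ∀ C : G.Coloring (Fin n), ∀ i : Fin n, Odd (C.colorClass i).ncard) →
      improperTwinIndex G = n) := by
  classical
  haveI : Nonempty V := Fintype.card_pos_iff.mp (by omega)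
  have hnontriv : Nontrivial V := Fintype.one_lt_card_iff_nontrivial.mp (by omega)
  obtain ⟨u0, v0, huv0⟩ := hnontriv
  have hedge : ∃ a b : V, G.Adj a b := by
    obtain ⟨w⟩ := hG u0 v0
    cases w with
    | nil => exact absurd rfl huv0
    | cons h _ => exact ⟨_, _, h⟩
  have hcoln : G.Colorable n := SimpleGraph.chromaticNumber_le_iff_colorable.mp (le_of_eq hn)
  have hge2 : 2 ≤ n := by
    obtain ⟨C⟩ := hcoln
    obtain ⟨a, b, hab⟩ := hedge
    have hne := C.valid hab
    by_contra hlt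
    push_neg at hlt
    interval_cases n
    · exact Fin.elim0 (C a)
    · exact hne (Subsingleton.elim _ _)
  have hSlb : ∀ x ∈ {k | 2 ≤ k ∧ ∃ s : Sym2 V → ZMod k, IsImproperTwin G k s}, n ≤ x := by
    rintro x ⟨hx2, s, hs⟩
    have hcol := Twin.colorable_of_twin hx2 s hs
    have hle := hcol.chromaticNumber_le
    rw [hn] at hle
    exact_mod_cast hle
  have hoddwalk : 3 ≤ n → ∃ (r : V) (p : G.Walk r r), Odd p.length := by
    intro h3n
    apply Twin.exists_odd_closed_walk hG
    intro h2col
    have hle := h2col.chromaticNumber_le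
    rw [hn] at hle
    have : n ≤ 2 := by exact_mod_cast hle
    omega
  have hmem_of_notP : ¬ (n % 4 = 2 ∧
      ∀ C : G.Coloring (Fin n), ∀ i : Fin n, Odd (C.colorClass i).ncard) →
      n ∈ {k | 2 ≤ k ∧ ∃ s : Sym2 V → ZMod k, IsImproperTwin G k s} := by
    intro hnp
    refine ⟨hge2, ?_⟩
    rcases Nat.even_or_odd n with hev | hod
    · rw [Nat.even_iff] at hev
      by_cases hn4 : n % 4 = 2
      · have hex : ∃ C : G.Coloring (Fin n), ∃ i, ¬ Odd (C.colorClass i).ncard := by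
          by_contra hq
          push_neg at hq
          exact hnp ⟨hn4, fun C i => hq C i⟩
        obtain ⟨C, i, hi⟩ := hex
        rw [Nat.not_odd_iff_even, Twin.ncard_colorClass] at hi
        by_cases hcase : n = 2
        · subst hcase
          exact Twin.construction_two hG C i hi
        · obtain ⟨r, p₀, hodd⟩ := hoddwalk (by omega)
          exact Twin.construction_even hG p₀ hodd hev (by omega) C (Or.inr ⟨i, hi⟩)
      · obtain ⟨C⟩ := hcoln
        obtain ⟨r, p₀, hodd⟩ := hoddwalk (by omega)
        exact Twin.construction_even hG p₀ hodd hev (by omega) C (Or.inl (by omega))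
    · obtain ⟨C⟩ := hcoln
      obtain ⟨r, p₀, hodd⟩ := hoddwalk (by
        rw [Nat.odd_iff] at hod
        omega)
      have hunit : IsUnit (2 : ZMod n) := by
        have h2 : ((2 : ℕ) : ZMod n) = (2 : ZMod n) := by push_cast; ring
        rw [← h2, ZMod.isUnit_iff_coprime]
        rw [Nat.odd_iff] at hod
        rw [Nat.Prime.coprime_iff_not_dvd Nat.prime_two]
        omega
      exact Twin.construction_unit hG p₀ hodd (le_refl n) hunit C
  have hmem_of_P : (n % 4 = 2 ∧
      ∀ C : G.Coloring (Fin n), ∀ i : Fin n, Odd (C.colorClass i).ncard) →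
      (n + 1) ∈ {k | 2 ≤ k ∧ ∃ s : Sym2 V → ZMod k, IsImproperTwin G k s} ∧
      n ∉ {k | 2 ≤ k ∧ ∃ s : Sym2 V → ZMod k, IsImproperTwin G k s} := by
    rintro ⟨hn4, hall⟩
    constructor
    · refine ⟨by omega, ?_⟩
      by_cases hcase : n = 2
      · subst hcase
        obtain ⟨C⟩ := hcoln
        have hfin2 : ∀ a : Fin 2, (¬ a = 0) ↔ a = 1 := by decide
        have hsplitc : (Finset.univ.filter (fun v => C v = 0)).card
            + (Finset.univ.filter (fun v => C v = 1)).card = Fintype.card V := by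
          have htot := Finset.card_filter_add_card_filter_not
            (s := (Finset.univ : Finset V)) (p := fun v => C v = (0 : Fin 2))
          rw [Finset.card_univ] at htot
          have he : Finset.univ.filter (fun v => ¬ C v = 0)
              = Finset.univ.filter (fun v => C v = 1) := by
            apply Finset.filter_congr
            intro v _
            exact hfin2 (C v)
          rw [he] at htot
          exact htot
        have hone : ∃ i : Fin 2, 2 ≤ (Finset.univ.filter (fun v => C v = i)).card := by
          by_contra hq
          push_neg at hq
          have h0 := hq 0
          have h1 := hq 1
          omega
        obtain ⟨i, hi⟩ := hone
        have hfin : ∀ a b c : Fin 2, a ≠ b → ((a = c) ↔ ¬ (b = c)) := by decide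
        let cb : G.Coloring Bool := SimpleGraph.Coloring.mk (fun v => decide (C v = i)) (by
          intro u v huv hc
          rw [decide_eq_decide] at hc
          have h := hfin (C u) (C v) i (C.valid huv)
          tauto)
        apply Twin.construction_three hG cb
        have e1 : Finset.univ.filter (fun v => cb v = true)
            = Finset.univ.filter (fun v => C v = i) := by
          apply Finset.filter_congr
          intro v _
          rw [show cb v = decide (C v = i) from rfl, decide_eq_true_eq]
        rw [e1]
        exact hi
      · obtain ⟨C⟩ := hcoln
        obtain ⟨r, p₀, hodd⟩ := hoddwalk (by omega)
        have hunit : IsUnit (2 : ZMod (n + 1)) := by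
          have h2 : ((2 : ℕ) : ZMod (n + 1)) = (2 : ZMod (n + 1)) := by push_cast; ring
          rw [← h2, ZMod.isUnit_iff_coprime]
          rw [Nat.Prime.coprime_iff_not_dvd Nat.prime_two]
          omega
        exact Twin.construction_unit hG p₀ hodd (by omega) hunit C
    · rintro ⟨_, s, hs⟩
      exact Twin.no_twin_of_bad hn4 hall s hs
  have hiP : (n % 4 = 2 ∧
      ∀ C : G.Coloring (Fin n), ∀ i : Fin n, Odd (C.colorClass i).ncard) →
      improperTwinIndex G = n + 1 := by
    intro hp
    obtain ⟨hmem, hnot⟩ := hmem_of_P hp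
    have h1 : improperTwinIndex G ≤ n + 1 := Nat.sInf_le hmem
    have h2 : improperTwinIndex G ∈ {k | 2 ≤ k ∧ ∃ s : Sym2 V → ZMod k, IsImproperTwin G k s} :=
      Nat.sInf_mem ⟨n + 1, hmem⟩
    have h3 : n ≤ improperTwinIndex G := hSlb _ h2
    have h4 : improperTwinIndex G ≠ n := fun hc => hnot (hc ▸ h2)
    omega
  have hiNP : ¬ (n % 4 = 2 ∧
      ∀ C : G.Coloring (Fin n), ∀ i : Fin n, Odd (C.colorClass i).ncard) →
      improperTwinIndex G = n := by
    intro hnp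
    have hmem := hmem_of_notP hnp
    have h1 : improperTwinIndex G ≤ n := Nat.sInf_le hmem
    have h2 : n ≤ improperTwinIndex G := hSlb _ (Nat.sInf_mem ⟨n, hmem⟩)
    omega
  refine ⟨⟨fun h => ?_, fun hp => hiP hp⟩, hiNP⟩
  by_contra hnp
  have := hiNP hnp
  omega
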